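/- If (Q,·,D,R) is a constellation with range, then with ≤ the natural order and s∘t := s·t when R(s) = D(t) (undefined otherwise), (Q,∘,D,R,≤) is an ordered category with restrictions given by e|s = e·s for e ≤ D(s). Conversely, if (C,∘,D,R,≤) is an ordered category with restrictions, then defining s·t := s∘(R(s)|t) whenever R(s) ≤ D(t) makes (C,·,D,R) a constellation with range whose natural order is ≤. These two constructions are mutually inverse. -/

import Mathlib

namespace ConstellationsRange
open Classical

variable {Q : Type*}

/-- An (object-free) constellation: a partial binary operation `mul` (encoded via `Option`)
with a domain operation `D`, satisfying (Q1)-(Q3). -/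
structure Constellation (Q : Type*) where
  mul : Q → Q → Option Q
  D : Q → Q
  /-- (Q1) if `x·(y·z)` exists then `(x·y)·z` exists and the two are equal. -/
  q1 : ∀ x y z yz w, mul y z = some yz → mul x yz = some w →
      ∃ xy, mul x y = some xy ∧ mul xy z = some w
  /-- (Q2) if `x·y` and `y·z` exist then `x·(y·z)` exists. -/
  q2 : ∀ x y z xy yz, mul x y = some xy → mul y z = some yz → (mul x yz).isSome
  /-- `D x` is a right identity. -/
  q3_rid : ∀ x y z, mul y (D x) = some z → z = y
  /-- `D x · x = x`. -/
  q3_mul : ∀ x, mul (D x) x = some x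
  /-- `D x` is the unique right identity `e` with `e·x = x`. -/
  q3_uniq : ∀ x e, (∀ y z, mul y e = some z → z = y) → mul e x = some x → e = D x

/-- The projections of a constellation are the elements of the form `D s`. -/
def IsProj (C : Constellation Q) (e : Q) : Prop := ∃ s, C.D s = e

/-- A pre-range structure: `R s` is the unique smallest projection `e` (w.r.t. the
standard quasiorder `e ≤ f ↔ e·f exists`) such that `s·e` exists. -/
structure PreRange (C : Constellation Q) where
  R : Q → Q
  proj : ∀ s, IsProj C (R s)
  ex : ∀ s, (C.mul s (R s)).isSome
  min : ∀ s f, IsProj C f → (C.mul s f).isSome → (C.mul (R s) f).isSome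
  uniq : ∀ s e, IsProj C e → (C.mul s e).isSome →
      (∀ f, IsProj C f → (C.mul s f).isSome → (C.mul e f).isSome) → e = R s

/-- The natural (quasi)order on a constellation: `s ≤ t` iff `s = D(s)·t`. -/
def natle (C : Constellation Q) (s t : Q) : Prop := C.mul (C.D s) t = some s

/-- The derived partial operation `s∘t := s·t` when `R s = D t`, undefined otherwise. -/
noncomputable def catOf (C : Constellation Q) (R : Q → Q) : Q → Q → Option Q :=
  fun s t => if R s = C.D t then C.mul s t else none

/-- An object-free category, with domain and range operations. All fields are
standard properties of (object-free) categories. -/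
structure PCat (Q : Type*) where
  comp : Q → Q → Option Q
  D : Q → Q
  R : Q → Q
  /-- (C1) `x∘(y∘z)` exists iff `(x∘y)∘z` exists, and then they are equal. -/
  c1 : ∀ x y z, (comp y z).bind (comp x) = (comp x y).bind (fun xy => comp xy z)
  /-- (C2) -/
  c2 : ∀ x y z xy yz, comp x y = some xy → comp y z = some yz → (comp x yz).isSome
  dId : ∀ x, comp (D x) x = some x
  rId : ∀ x, comp x (R x) = some x
  dL : ∀ x y z, comp (D x) y = some z → z = y
  dR' : ∀ x y z, comp y (D x) = some z → z = y
  rL : ∀ x y z, comp (R x) y = some z → z = y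
  rR : ∀ x y z, comp y (R x) = some z → z = y
  /-- The product `x∘y` exists iff `R x = D y`. -/
  defIff : ∀ x y, (comp x y).isSome ↔ R x = D y
  dD : ∀ x, D (D x) = D x
  rD : ∀ x, R (D x) = D x
  dRx : ∀ x, D (R x) = R x
  rRx : ∀ x, R (R x) = R x
  dComp : ∀ x y z, comp x y = some z → D z = D x
  rComp : ∀ x y z, comp x y = some z → R z = R y

/-- Epimorphism in an object-free category: `s∘x = s∘y` implies `x = y`. -/
def Epi (C : PCat Q) (s : Q) : Prop :=
  ∀ x y w, C.comp s x = some w → C.comp s y = some w → x = y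

/-- Monomorphism: `x∘m = y∘m` implies `x = y`. -/
def Mono (C : PCat Q) (m : Q) : Prop :=
  ∀ x y w, C.comp x m = some w → C.comp y m = some w → x = y

/-- Isomorphism. -/
def Iso (C : PCat Q) (a : Q) : Prop :=
  ∃ b, C.comp a b = some (C.D a) ∧ C.comp b a = some (C.D b)

/-- An ordered category with restrictions. -/
structure OrderedCatRes (Q : Type*) extends PCat Q where
  le : Q → Q → Prop
  le_refl : ∀ s, le s s
  le_antisymm : ∀ s t, le s t → le t s → s = t
  le_trans : ∀ s t u, le s t → le t u → le s u
  /-- (O1) -/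
  o1 : ∀ a b c d ac bd, le a b → le c d → comp a c = some ac → comp b d = some bd → le ac bd
  /-- (O2) -/
  o2 : ∀ a b, le a b → le (D a) (D b)
  /-- (O2') -/
  o2' : ∀ a b, le a b → le (R a) (R b)
  /-- the restriction `e|s`, for identities `e ≤ D s`. -/
  rstr : Q → Q → Q
  rstr_le : ∀ e s, D e = e → le e (D s) → le (rstr e s) s
  rstr_dom : ∀ e s, D e = e → le e (D s) → D (rstr e s) = e
  /-- (O3) uniqueness: `e|s` is the unique `x ≤ s` with `D x = e`. -/
  rstr_uniq : ∀ e s x, D e = e → le e (D s) → le x s → D x = e → x = rstr e s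

/-- The constellation product derived from an ordered category with restrictions:
`s·t := s∘(R(s)|t)` whenever `R s ≤ D t`. -/
noncomputable def conOf (O : OrderedCatRes Q) : Q → Q → Option Q :=
  fun s t => if O.le (O.R s) (O.D t) then O.comp s (O.rstr (O.R s) t) else none

section ConHelpers

variable (C : Constellation Q)

lemma dd (x : Q) : C.D (C.D x) = C.D x := by
  obtain ⟨xy, hxy, _⟩ := C.q1 (C.D x) (C.D x) x x x (C.q3_mul x) (C.q3_mul x)
  have hxe : xy = C.D x := C.q3_rid x _ _ hxy
  subst hxe
  exact (C.q3_uniq (C.D x) (C.D x) (fun y z h => C.q3_rid x y z h) hxy).symm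

lemma isProj_iff (e : Q) : IsProj C e ↔ C.D e = e := by
  constructor
  · rintro ⟨s, rfl⟩; exact dd C s
  · intro h; exact ⟨e, h⟩

lemma projRid {e : Q} (he : C.D e = e) {y z : Q} (h : C.mul y e = some z) : z = y := by
  rw [← he] at h; exact C.q3_rid e y z h

lemma projSelf {e : Q} (he : C.D e = e) : C.mul e e = some e := by
  have := C.q3_mul e
  rwa [he] at this

lemma mulProj {s : Q} {e : Q} (he : C.D e = e) (h : (C.mul s e).isSome) :
    C.mul s e = some s := by
  obtain ⟨z, hz⟩ := Option.isSome_iff_exists.mp h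
  rw [hz, projRid C he hz]

/-- `D (a·b) = D a`. -/
lemma dMul {a b c : Q} (h : C.mul a b = some c) : C.D c = C.D a := by
  have h2 := C.q2 (C.D a) a b a c (C.q3_mul a) h
  obtain ⟨w, hw⟩ := Option.isSome_iff_exists.mp h2
  obtain ⟨xy, hxy, hxyb⟩ := C.q1 (C.D a) a b c w h hw
  have hxya : a = xy := Option.some_injective _ ((C.q3_mul a).symm.trans hxy)
  rw [← hxya] at hxyb
  rw [h] at hxyb
  have hcw : c = w := Option.some_injective _ hxyb
  rw [← hcw] at hw
  exact (C.q3_uniq c (C.D a) (fun y z hz => C.q3_rid a y z hz) hw).symm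

lemma natle_refl (s : Q) : natle C s s := C.q3_mul s

lemma natle_D {s t : Q} (h : natle C s t) : C.mul (C.D s) (C.D t) = some (C.D s) := by
  have h1 : C.mul (C.D s) t = some s := h
  obtain ⟨xy, hxy, _⟩ := C.q1 (C.D s) (C.D t) t t s (C.q3_mul t) h1
  have : xy = C.D s := C.q3_rid t _ _ hxy
  subst this; exact hxy

lemma natle_trans {s t u : Q} (h1 : natle C s t) (h2 : natle C t u) : natle C s u := by
  have h1' : C.mul (C.D s) t = some s := h1
  have h2' : C.mul (C.D t) u = some t := h2
  rw [show (t : Q) = t from rfl] at h1'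
  -- mul Ds (Dt·u) = mul Ds t = s
  obtain ⟨xy, hxy, hxyu⟩ := C.q1 (C.D s) (C.D t) u t s h2' h1'
  have : xy = C.D s := C.q3_rid t _ _ hxy
  subst this
  exact hxyu

/-- `s ≤ t` implies `s · R t = s`. -/
lemma natle_mulR (PR : PreRange C) {s t : Q} (h : natle C s t) :
    C.mul s (PR.R t) = some s := by
  have hRt : C.D (PR.R t) = PR.R t := (isProj_iff C _).mp (PR.proj t)
  have htR : C.mul t (PR.R t) = some t := mulProj C hRt (PR.ex t)
  have h1 : C.mul (C.D s) t = some s := h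
  obtain ⟨xy, hxy, hxyR⟩ := C.q1 (C.D s) t (PR.R t) t s htR h1
  have : xy = s := Option.some_injective _ (hxy.symm.trans h1)
  subst this
  exact hxyR

end ConHelpers

section PRHelpers

variable (C : Constellation Q) (PR : PreRange C)

lemma R_proj_eq {e : Q} (he : C.D e = e) : PR.R e = e := by
  refine (PR.uniq e e ⟨e, he⟩ (by rw [projSelf C he]; rfl) ?_).symm
  intro f _ hf; exact hf

include PR in
lemma projAntisymm {e f : Q} (he : C.D e = e) (hf : C.D f = f)
    (h1 : (C.mul e f).isSome) (h2 : (C.mul f e).isSome) : e = f := by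
  have h1' : C.mul e f = some e := mulProj C hf h1
  have h2' : C.mul f e = some f := mulProj C he h2
  have key : f = PR.R e := by
    refine PR.uniq e f ⟨f, hf⟩ h1 ?_
    intro g hg hsg
    have hg' : C.D g = g := (isProj_iff C g).mp hg
    have heg : C.mul e g = some e := mulProj C hg' hsg
    obtain ⟨xy, hxy, hxyg⟩ := C.q1 f e g e f heg h2'
    have : xy = f := Option.some_injective _ (hxy.symm.trans h2')
    subst this
    rw [hxyg]; rfl
  rw [key, R_proj_eq C PR he]

include PR in
lemma natle_antisymm {s t : Q} (h1 : natle C s t) (h2 : natle C t s) : s = t := by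
  have e1 := natle_D C h1
  have e2 := natle_D C h2
  have hDs : C.D s = C.D t :=
    projAntisymm C PR (dd C s) (dd C t) (by rw [e1]; rfl) (by rw [e2]; rfl)
  have h1' : C.mul (C.D s) t = some s := h1
  rw [hDs, C.q3_mul t] at h1'
  exact (Option.some_injective _ h1').symm

lemma natle_R {s t : Q} (h : natle C s t) : natle C (PR.R s) (PR.R t) := by
  have hsR : C.mul s (PR.R t) = some s := natle_mulR C PR h
  have h2 : (C.mul (PR.R s) (PR.R t)).isSome :=
    PR.min s (PR.R t) (PR.proj t) (by rw [hsR]; rfl)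
  have hRs : C.D (PR.R s) = PR.R s := (isProj_iff C _).mp (PR.proj s)
  have hRt : C.D (PR.R t) = PR.R t := (isProj_iff C _).mp (PR.proj t)
  show C.mul (C.D (PR.R s)) (PR.R t) = some (PR.R s)
  rw [hRs]
  exact mulProj C hRt h2

/-- If `R x = D y` then `x · y` is defined. -/
lemma compDefined {x y : Q} (h : PR.R x = C.D y) : (C.mul x y).isSome := by
  have hRx : C.D (PR.R x) = PR.R x := (isProj_iff C _).mp (PR.proj x)
  have hx : C.mul x (PR.R x) = some x := mulProj C hRx (PR.ex x)
  rw [h] at hx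
  exact C.q2 x (C.D y) y x y hx (C.q3_mul y)

end PRHelpers


section PRHelpers2

variable (C : Constellation Q) (PR : PreRange C)

/-- `R(x·y) = R y` when `R x = D y`, derived from the range congruence condition. -/
lemma rMul (hcong : ∀ s t u v, C.mul s t = some u → C.mul (PR.R s) t = some v →
    PR.R v = PR.R u) {x y u : Q} (hc : PR.R x = C.D y) (h : C.mul x y = some u) :
    PR.R u = PR.R y := by
  have hv : C.mul (PR.R x) y = some y := by rw [hc]; exact C.q3_mul y
  exact (hcong x y u y h hv).symm

/-- The ordered category with restrictions built from a constellation with range. -/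
noncomputable def buildO
    (hcong : ∀ s t u v, C.mul s t = some u → C.mul (PR.R s) t = some v →
      PR.R v = PR.R u) : OrderedCatRes Q where
  comp := catOf C PR.R
  D := C.D
  R := PR.R
  le := natle C
  rstr := fun e s => (C.mul e s).getD s
  dD := dd C
  rD := fun x => R_proj_eq C PR (dd C x)
  dRx := fun x => (isProj_iff C _).mp (PR.proj x)
  rRx := fun x => R_proj_eq C PR ((isProj_iff C _).mp (PR.proj x))
  dId := by
    intro x
    show (if PR.R (C.D x) = C.D x then C.mul (C.D x) x else none) = some x
    rw [if_pos (R_proj_eq C PR (dd C x))]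
    exact C.q3_mul x
  rId := by
    intro x
    show (if PR.R x = C.D (PR.R x) then C.mul x (PR.R x) else none) = some x
    rw [if_pos ((isProj_iff C _).mp (PR.proj x)).symm]
    exact mulProj C ((isProj_iff C _).mp (PR.proj x)) (PR.ex x)
  dL := by
    intro x y z h
    simp only [catOf] at h
    split_ifs at h with hc
    rw [R_proj_eq C PR (dd C x)] at hc
    rw [hc, C.q3_mul y] at h
    exact (Option.some_injective _ h).symm
  dR' := by
    intro x y z h
    simp only [catOf] at h
    split_ifs at h with hc
    exact C.q3_rid x y z h
  rL := by
    intro x y z h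
    simp only [catOf] at h
    split_ifs at h with hc
    rw [R_proj_eq C PR ((isProj_iff C _).mp (PR.proj x))] at hc
    rw [hc, C.q3_mul y] at h
    exact (Option.some_injective _ h).symm
  rR := by
    intro x y z h
    simp only [catOf] at h
    split_ifs at h with hc
    exact projRid C ((isProj_iff C _).mp (PR.proj x)) h
  defIff := by
    intro x y
    simp only [catOf]
    split_ifs with hc
    · simp only [hc, iff_true]
      exact compDefined C PR hc
    · simp [hc]
  dComp := by
    intro x y z h
    simp only [catOf] at h
    split_ifs at h with hc
    exact dMul C h
  rComp := by
    intro x y z h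
    simp only [catOf] at h
    split_ifs at h with hc
    exact rMul C PR hcong hc h
  c2 := by
    intro x y z xy yz h1 h2
    simp only [catOf] at h1 h2 ⊢
    split_ifs at h1 with hc1
    split_ifs at h2 with hc2
    have hcond : PR.R x = C.D yz := by rw [dMul C h2]; exact hc1
    rw [if_pos hcond]
    exact compDefined C PR hcond
  c1 := by
    intro x y z
    simp only [catOf]
    by_cases h1 : PR.R y = C.D z
    · rw [if_pos h1]
      obtain ⟨yz, hyz⟩ := Option.isSome_iff_exists.mp (compDefined C PR h1)
      rw [hyz]
      simp only [Option.bind_some, catOf]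
      by_cases h2 : PR.R x = C.D y
      · rw [if_pos h2]
        obtain ⟨xy, hxy⟩ := Option.isSome_iff_exists.mp (compDefined C PR h2)
        rw [hxy]
        simp only [Option.bind_some]
        have hcl : PR.R x = C.D yz := by rw [dMul C hyz]; exact h2
        have hcr : PR.R xy = C.D z := by rw [rMul C PR hcong h2 hxy]; exact h1
        rw [if_pos hcl, if_pos hcr]
        obtain ⟨w, hw⟩ := Option.isSome_iff_exists.mp (compDefined C PR hcl)
        obtain ⟨xy', hxy', hxy'w⟩ := C.q1 x y z yz w hyz hw
        have hxe : xy' = xy := Option.some_injective _ (hxy'.symm.trans hxy)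
        rw [hxe] at hxy'w
        rw [hw, hxy'w]
      · rw [if_neg h2]
        have hne : ¬ PR.R x = C.D yz := by rw [dMul C hyz]; exact h2
        rw [if_neg hne]
        rfl
    · rw [if_neg h1]
      simp only [Option.bind_none]
      by_cases h2 : PR.R x = C.D y
      · rw [if_pos h2]
        obtain ⟨xy, hxy⟩ := Option.isSome_iff_exists.mp (compDefined C PR h2)
        rw [hxy]
        simp only [Option.bind_some]
        have hne : ¬ PR.R xy = C.D z := by rw [rMul C PR hcong h2 hxy]; exact h1
        rw [if_neg hne]
      · rw [if_neg h2]
        rfl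
  le_refl := natle_refl C
  le_antisymm := fun _ _ => natle_antisymm C PR
  le_trans := fun _ _ _ => natle_trans C
  o2 := by
    intro a b h
    show C.mul (C.D (C.D a)) (C.D b) = some (C.D a)
    rw [dd C a]
    exact natle_D C h
  o2' := fun _ _ h => natle_R C PR h
  o1 := by
    intro a b c d ac bd hab hcd hac hbd
    simp only [catOf] at hac hbd
    split_ifs at hac with hc1
    split_ifs at hbd with hc2
    have h1 : C.mul (C.D a) b = some a := hab
    have hw2 := C.q2 (C.D a) b d a bd h1 hbd
    obtain ⟨w, hw⟩ := Option.isSome_iff_exists.mp hw2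
    obtain ⟨xy, hxy, hxyd⟩ := C.q1 (C.D a) b d bd w hbd hw
    have hxe : xy = a := Option.some_injective _ (hxy.symm.trans h1)
    rw [hxe] at hxyd
    -- hxyd : C.mul a d = some w, hw : C.mul (C.D a) bd = some w
    have haDc : C.mul a (C.D c) = some a := by
      rw [← hc1]
      exact mulProj C ((isProj_iff C _).mp (PR.proj a)) (PR.ex a)
    have h2 : C.mul (C.D c) d = some c := hcd
    obtain ⟨xy2, hxy2, hxy2d⟩ := C.q1 a (C.D c) d c ac h2 hac
    have hxe2 : xy2 = a := Option.some_injective _ (hxy2.symm.trans haDc)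
    rw [hxe2] at hxy2d
    -- hxy2d : C.mul a d = some ac
    have hwac : w = ac := Option.some_injective _ (hxyd.symm.trans hxy2d)
    rw [hwac] at hw
    show C.mul (C.D ac) bd = some ac
    rw [dMul C hac]
    exact hw
  rstr_le := by
    intro e s he hle
    have he2 : C.D e = e := he
    have hle' : C.mul e (C.D s) = some e := by
      have h3 : C.mul (C.D e) (C.D s) = some e := hle
      rwa [he2] at h3
    have hes := C.q2 e (C.D s) s e s hle' (C.q3_mul s)
    obtain ⟨r, hr⟩ := Option.isSome_iff_exists.mp hes
    show C.mul (C.D ((C.mul e s).getD s)) s = some ((C.mul e s).getD s)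
    rw [hr]
    simp only [Option.getD_some]
    rw [dMul C hr, he2]
    exact hr
  rstr_dom := by
    intro e s he hle
    have he2 : C.D e = e := he
    have hle' : C.mul e (C.D s) = some e := by
      have h3 : C.mul (C.D e) (C.D s) = some e := hle
      rwa [he2] at h3
    have hes := C.q2 e (C.D s) s e s hle' (C.q3_mul s)
    obtain ⟨r, hr⟩ := Option.isSome_iff_exists.mp hes
    show C.D ((C.mul e s).getD s) = e
    rw [hr]
    simp only [Option.getD_some]
    rw [dMul C hr, he2]
  rstr_uniq := by
    intro e s x he hle hxs hxd
    have hxd2 : C.D x = e := hxd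
    have hx : C.mul (C.D x) s = some x := hxs
    rw [hxd2] at hx
    show x = (C.mul e s).getD s
    rw [hx]
    simp

end PRHelpers2

section OHelpers

variable (O : OrderedCatRes Q)

lemma compSome {x y : Q} (h : O.R x = O.D y) : ∃ u, O.comp x y = some u :=
  Option.isSome_iff_exists.mp ((O.defIff x y).mpr h)

lemma compNone {x y : Q} (h : ¬ O.R x = O.D y) : O.comp x y = none := by
  cases hc : O.comp x y with
  | none => rfl
  | some u => exact absurd ((O.defIff x y).mp (by rw [hc]; rfl)) h

lemma rstr_self {e t : Q} (h : O.D t = e) : O.rstr e t = t := by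
  refine (O.rstr_uniq e t t ?_ ?_ (O.le_refl t) h).symm
  · rw [← h, O.dD]
  · rw [← h]; exact O.le_refl _

lemma rstr_id {e f : Q} (he : O.D e = e) (hf : O.D f = f) (h : O.le e f) :
    O.rstr e f = e :=
  (O.rstr_uniq e f e he (by rwa [hf]) h he).symm

lemma rstr_nest {e f s : Q} (he : O.D e = e) (hf : O.D f = f) (hef : O.le e f)
    (hfs : O.le f (O.D s)) : O.rstr e (O.rstr f s) = O.rstr e s := by
  have hes : O.le e (O.D s) := O.le_trans _ _ _ hef hfs
  have hD : O.D (O.rstr f s) = f := O.rstr_dom f s hf hfs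
  have h1 : O.le e (O.D (O.rstr f s)) := by rwa [hD]
  have h2 := O.rstr_le e (O.rstr f s) he h1
  exact O.rstr_uniq e s _ he hes (O.le_trans _ _ _ h2 (O.rstr_le f s hf hfs))
    (O.rstr_dom e _ he h1)

lemma rstr_mono {e f s : Q} (he : O.D e = e) (hf : O.D f = f) (hef : O.le e f)
    (hfs : O.le f (O.D s)) : O.le (O.rstr e s) (O.rstr f s) := by
  rw [← rstr_nest O he hf hef hfs]
  have hD : O.D (O.rstr f s) = f := O.rstr_dom f s hf hfs
  exact O.rstr_le e (O.rstr f s) he (by rwa [hD])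

lemma conOf_some {s t : Q} (h : O.le (O.R s) (O.D t)) :
    ∃ u, conOf O s t = some u ∧ O.comp s (O.rstr (O.R s) t) = some u := by
  have hd : O.D (O.rstr (O.R s) t) = O.R s := O.rstr_dom _ _ (O.dRx s) h
  obtain ⟨u, hu⟩ := compSome O hd.symm
  exact ⟨u, by simp [conOf, h, hu], hu⟩

lemma conOf_none {s t : Q} (h : ¬ O.le (O.R s) (O.D t)) : conOf O s t = none := by
  simp [conOf, h]

lemma conOf_le {s t u : Q} (h : conOf O s t = some u) : O.le (O.R s) (O.D t) := by
  by_contra hc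
  rw [conOf_none O hc] at h
  cases h

/-- The constellation built from an ordered category with restrictions. -/
noncomputable def buildC : Constellation Q where
  mul := conOf O
  D := O.D
  q3_mul := by
    intro x
    have h : O.le (O.R (O.D x)) (O.D x) := by rw [O.rD]; exact O.le_refl _
    obtain ⟨u, hu, hcu⟩ := conOf_some O h
    have hr : O.rstr (O.R (O.D x)) x = x := by rw [O.rD]; exact rstr_self O rfl
    rw [hr, O.dId x] at hcu
    rw [hu, ← Option.some_injective _ hcu]
  q3_rid := by
    intro x y z h
    by_cases hle : O.le (O.R y) (O.D (O.D x))
    · obtain ⟨u, hu, hcu⟩ := conOf_some O hle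
      have hz : z = u := Option.some_injective _ (h.symm.trans hu)
      have hle' : O.le (O.R y) (O.D x) := by rwa [O.dD] at hle
      have hr : O.rstr (O.R y) (O.D x) = O.R y :=
        rstr_id O (O.dRx y) (O.dD x) hle'
      rw [hr, O.rId y] at hcu
      rw [hz, ← Option.some_injective _ hcu]
    · rw [conOf_none O hle] at h
      cases h
  q3_uniq := by
    intro x e hrid hex
    have hle1 : O.le (O.R (O.D e)) (O.D e) := by rw [O.rD]; exact O.le_refl _
    obtain ⟨u, hu, hcu⟩ := conOf_some O hle1
    have hr : O.rstr (O.R (O.D e)) e = e := by rw [O.rD]; exact rstr_self O rfl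
    rw [hr, O.dId e] at hcu
    have hu' : conOf O (O.D e) e = some e := by rw [hu, ← Option.some_injective _ hcu]
    have hde : e = O.D e := hrid (O.D e) e hu'
    have hle2 : O.le (O.R e) (O.D x) := conOf_le O hex
    obtain ⟨w, hw, hcw⟩ := conOf_some O hle2
    have hxw : x = w := Option.some_injective _ (hex.symm.trans hw)
    have := O.dComp e _ w hcw
    rw [← hxw] at this
    rw [this, ← hde]
  q2 := by
    intro x y z xy yz h1 h2
    have hle1 : O.le (O.R x) (O.D y) := conOf_le O h1
    obtain ⟨u2, hu2, hcu2⟩ := conOf_some O (conOf_le O h2)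
    have hyz : yz = u2 := Option.some_injective _ (h2.symm.trans hu2)
    have hD : O.D yz = O.D y := by rw [hyz]; exact O.dComp y _ u2 hcu2
    have hle : O.le (O.R x) (O.D yz) := by rwa [hD]
    obtain ⟨u, hu, _⟩ := conOf_some O hle
    rw [hu]; rfl
  q1 := by
    intro x y z yz w h1 h2
    have hle1 : O.le (O.R y) (O.D z) := conOf_le O h1
    obtain ⟨u1, hu1, hc1⟩ := conOf_some O hle1
    have hyz : yz = u1 := Option.some_injective _ (h1.symm.trans hu1)
    rw [← hyz] at hc1
    have hle2 : O.le (O.R x) (O.D yz) := conOf_le O h2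
    obtain ⟨u2, hu2, hc2⟩ := conOf_some O hle2
    have hww : w = u2 := Option.some_injective _ (h2.symm.trans hu2)
    rw [← hww] at hc2
    have hDyz : O.D yz = O.D y := O.dComp y _ yz hc1
    have hle2' : O.le (O.R x) (O.D y) := by rwa [hDyz] at hle2
    obtain ⟨xy, hxy, hcxy⟩ := conOf_some O hle2'
    refine ⟨xy, hxy, ?_⟩
    set a := O.rstr (O.R x) y with ha
    have ha_le : O.le a y := O.rstr_le _ _ (O.dRx x) hle2'
    have haD : O.D a = O.R x := O.rstr_dom _ _ (O.dRx x) hle2'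
    have hRxy : O.R xy = O.R a := O.rComp x a xy hcxy
    have hRa_le : O.le (O.R a) (O.R y) := O.o2' a y ha_le
    have hle3 : O.le (O.R xy) (O.D z) := by
      rw [hRxy]; exact O.le_trans _ _ _ hRa_le hle1
    obtain ⟨w2, hw2, hcw2⟩ := conOf_some O hle3
    set a' := O.rstr (O.R a) z with ha'
    have hDa' : O.D a' = O.R a :=
      O.rstr_dom _ _ (O.dRx a) (O.le_trans _ _ _ hRa_le hle1)
    obtain ⟨b, hb⟩ := compSome O (show O.R a = O.D a' from hDa'.symm)
    -- b = rstr (R x) yz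
    have hb_le : O.le b yz := by
      refine O.o1 a y a' (O.rstr (O.R y) z) b yz ha_le ?_ hb hc1
      exact rstr_mono O (O.dRx a) (O.dRx y) hRa_le hle1
    have hbD : O.D b = O.R x := by rw [O.dComp a a' b hb, haD]
    have hbr : b = O.rstr (O.R x) yz :=
      O.rstr_uniq (O.R x) yz b (O.dRx x) hle2 hb_le hbD
    -- now use associativity
    have hassoc := O.c1 x a a'
    rw [hb, hcxy] at hassoc
    simp only [Option.bind_some] at hassoc
    rw [hbr, hc2] at hassoc
    -- hassoc : some w = O.comp xy a'
    have hra : O.rstr (O.R xy) z = a' := by rw [hRxy]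
    rw [hra] at hcw2
    rw [hw2]
    exact (hassoc.trans hcw2).symm

lemma buildC_isProj {e : Q} : IsProj (buildC O) e ↔ O.D e = e :=
  isProj_iff (buildC O) e

/-- The pre-range structure on `buildC O`. -/
noncomputable def buildPR : PreRange (buildC O) where
  R := O.R
  proj := fun s => ⟨O.R s, O.dRx s⟩
  ex := by
    intro s
    have h : O.le (O.R s) ((buildC O).D (O.R s)) := by
      show O.le (O.R s) (O.D (O.R s))
      rw [O.dRx]; exact O.le_refl _
    obtain ⟨u, hu, _⟩ := conOf_some O h
    show (conOf O s (O.R s)).isSome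
    rw [hu]; rfl
  min := by
    intro s f hf hsf
    obtain ⟨u, hu⟩ := Option.isSome_iff_exists.mp hsf
    have hle : O.le (O.R s) (O.D f) := conOf_le O hu
    have hle2 : O.le (O.R (O.R s)) (O.D f) := by rwa [O.rRx]
    obtain ⟨v, hv, _⟩ := conOf_some O hle2
    show (conOf O (O.R s) f).isSome
    rw [hv]; rfl
  uniq := by
    intro s e he hse hmin
    have he' : O.D e = e := (buildC_isProj O).mp he
    obtain ⟨u, hu⟩ := Option.isSome_iff_exists.mp hse
    have hle1 : O.le (O.R s) e := by
      have := conOf_le O hu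
      rwa [he'] at this
    have hsR : ((buildC O).mul s (O.R s)).isSome := by
      have h : O.le (O.R s) (O.D (O.R s)) := by rw [O.dRx]; exact O.le_refl _
      obtain ⟨v, hv, _⟩ := conOf_some O h
      show (conOf O s (O.R s)).isSome
      rw [hv]; rfl
    have heR := hmin (O.R s) ⟨O.R s, O.dRx s⟩ hsR
    obtain ⟨v, hv⟩ := Option.isSome_iff_exists.mp heR
    have hle2 : O.le e (O.R s) := by
      have := conOf_le O hv
      rwa [O.dRx, ← he', O.rD, he'] at this
    exact O.le_antisymm e (O.R s) hle2 hle1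

end OHelpers

/-- the correspondence between constellations with range and ordered
categories with restrictions, and its two directions are mutually inverse. -/
theorem stmt8 :
    -- a constellation with range yields an ordered category with restrictions
    (∀ (C : Constellation Q) (PR : PreRange C),
      (∀ s t u v, C.mul s t = some u → C.mul (PR.R s) t = some v →
        PR.R v = PR.R u) →
      ∃ O : OrderedCatRes Q, O.comp = catOf C PR.R ∧ O.D = C.D ∧ O.R = PR.R ∧
        O.le = natle C ∧
        (∀ e s, IsProj C e → natle C e (C.D s) → C.mul e s = some (O.rstr e s))) ∧
    -- an ordered category with restrictions yields a constellation with range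
    (∀ O : OrderedCatRes Q,
      ∃ C : Constellation Q, C.mul = conOf O ∧ C.D = O.D ∧
        ∃ PR : PreRange C, PR.R = O.R ∧
          (∀ s t u v, C.mul s t = some u → C.mul (PR.R s) t = some v →
            PR.R v = PR.R u) ∧
          (∀ s t, natle C s t ↔ O.le s t)) ∧
    -- round trip: category → constellation → category
    (∀ (O : OrderedCatRes Q) (C : Constellation Q) (PR : PreRange C),
      C.mul = conOf O → C.D = O.D → PR.R = O.R → catOf C PR.R = O.comp) ∧
    -- round trip: constellation → category → constellation
    (∀ (C : Constellation Q) (PR : PreRange C) (O : OrderedCatRes Q),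
      O.comp = catOf C PR.R → O.D = C.D → O.R = PR.R → O.le = natle C →
      (∀ e s, IsProj C e → natle C e (C.D s) → C.mul e s = some (O.rstr e s)) →
      conOf O = C.mul) := by
  refine ⟨?_, ?_, ?_, ?_⟩
  · -- part 1
    intro C PR hcong
    refine ⟨buildO C PR hcong, rfl, rfl, rfl, rfl, ?_⟩
    intro e s he hle
    have he' : C.D e = e := (isProj_iff C e).mp he
    have hle' : C.mul e (C.D s) = some e := by
      have h3 : C.mul (C.D e) (C.D s) = some e := hle
      rwa [he'] at h3
    have hes := C.q2 e (C.D s) s e s hle' (C.q3_mul s)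
    obtain ⟨r, hr⟩ := Option.isSome_iff_exists.mp hes
    show C.mul e s = some ((C.mul e s).getD s)
    rw [hr]
    rfl
  · -- part 2
    intro O
    refine ⟨buildC O, rfl, rfl, buildPR O, rfl, ?_, ?_⟩
    · -- congruence
      intro s t u v hu hv
      have hu' : conOf O s t = some u := hu
      have hv' : conOf O (O.R s) t = some v := hv
      have hle : O.le (O.R s) (O.D t) := conOf_le O hu'
      obtain ⟨u0, hu0, hcu0⟩ := conOf_some O hle
      have huu : u = u0 := Option.some_injective _ (hu'.symm.trans hu0)
      have hle2 : O.le (O.R (O.R s)) (O.D t) := by rwa [O.rRx]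
      obtain ⟨v0, hv0, hcv0⟩ := conOf_some O hle2
      have hvv : v = v0 := Option.some_injective _ (hv'.symm.trans hv0)
      have hre : O.rstr (O.R (O.R s)) t = O.rstr (O.R s) t := by rw [O.rRx]
      rw [hre] at hcv0
      have hv0eq : v0 = O.rstr (O.R s) t := O.rL s _ v0 hcv0
      show O.R v = O.R u
      rw [huu, hvv, hv0eq, O.rComp s (O.rstr (O.R s) t) u0 hcu0]
    · -- natle iff le
      intro s t
      constructor
      · intro h
        have h' : conOf O (O.D s) t = some s := h
        have hle : O.le (O.R (O.D s)) (O.D t) := conOf_le O h'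
        obtain ⟨u, hu, hcu⟩ := conOf_some O hle
        have hsu : s = u := Option.some_injective _ (h'.symm.trans hu)
        have hueq : u = O.rstr (O.R (O.D s)) t := O.dL s _ u hcu
        have hfin : O.le (O.rstr (O.R (O.D s)) t) t :=
          O.rstr_le _ _ (O.dRx _) hle
        rw [hsu, hueq]
        exact hfin
      · intro h
        have hDle : O.le (O.D s) (O.D t) := O.o2 s t h
        have hle : O.le (O.R (O.D s)) (O.D t) := by rwa [O.rD]
        obtain ⟨u, hu, hcu⟩ := conOf_some O hle
        have hrs : O.rstr (O.R (O.D s)) t = s := by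
          rw [O.rD]
          exact (O.rstr_uniq (O.D s) t s (O.dD s) hDle h rfl).symm
        rw [hrs, O.dId s] at hcu
        show conOf O (O.D s) t = some s
        rw [hu, ← Option.some_injective _ hcu]
  · -- part 3
    intro O C PR hmul hD hR
    funext s t
    show (if PR.R s = C.D t then C.mul s t else none) = O.comp s t
    rw [hmul, hD, hR]
    by_cases h : O.R s = O.D t
    · rw [if_pos h]
      have hle : O.le (O.R s) (O.D t) := by rw [h]; exact O.le_refl _
      obtain ⟨u, hu, hcu⟩ := conOf_some O hle
      have hrt : O.rstr (O.R s) t = t := rstr_self O h.symm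
      rw [hrt] at hcu
      rw [hu, hcu]
    · rw [if_neg h]
      exact (compNone O h).symm
  · -- part 4
    intro C PR O hcomp hD hR hle hrstr
    funext s t
    show (if O.le (O.R s) (O.D t) then O.comp s (O.rstr (O.R s) t) else none) = C.mul s t
    rw [hcomp, hD, hR, hle]
    by_cases hc : natle C (PR.R s) (C.D t)
    · rw [if_pos hc]
      have hproj := PR.proj s
      have hr := hrstr (PR.R s) t hproj hc
      set r := O.rstr (PR.R s) t with hrdef
      show (if PR.R s = C.D r then C.mul s r else none) = C.mul s t
      have hDr : C.D r = PR.R s := by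
        rw [dMul C hr, (isProj_iff C _).mp hproj]
      rw [if_pos hDr.symm]
      have h1 : C.mul s (PR.R s) = some s :=
        mulProj C ((isProj_iff C _).mp hproj) (PR.ex s)
      have h2 := C.q2 s (PR.R s) t s r h1 hr
      obtain ⟨w, hw⟩ := Option.isSome_iff_exists.mp h2
      obtain ⟨xy, hxy, hxyt⟩ := C.q1 s (PR.R s) t r w hr hw
      have hxe : xy = s := Option.some_injective _ (hxy.symm.trans h1)
      rw [hxe] at hxyt
      rw [hw, ← hxyt]
    · rw [if_neg hc]
      cases hmu : C.mul s t with
      | none => rfl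
      | some u =>
        exfalso
        apply hc
        have hDtT : C.mul (C.D t) t = some t := C.q3_mul t
        obtain ⟨xy, hxy, _⟩ := C.q1 s (C.D t) t t u hDtT hmu
        have hmin := PR.min s (C.D t) ⟨t, rfl⟩ (by rw [hxy]; rfl)
        have hfin : C.mul (PR.R s) (C.D t) = some (PR.R s) :=
          mulProj C (dd C t) hmin
        show C.mul (C.D (PR.R s)) (C.D t) = some (PR.R s)
        rw [(isProj_iff C _).mp (PR.proj s)]
        exact hfin

end ConstellationsRange
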